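/- arXiv:1412.8568 — 3 statements merged into one kernel-verified Lean document; each statement's English description precedes it below -/
import Mathlib

section
/- Let K be a square of side 2h, let u ∈ P₄(K) and v ∈ P_T(K) = P₂ + span{x₁³, x₂³}, and let Π_K be the rectangular Morley interpolation operator on K. Then ∫_K (∂²(u-Π_K u)/∂x₁∂x₂)(∂²v/∂x₁∂x₂) dx₁dx₂ = 0. -/
open MeasureTheory Set

/-- Partial derivative in the first variable. -/
noncomputable def pd1 (f : ℝ → ℝ → ℝ) : ℝ → ℝ → ℝ := fun x y => deriv (fun t => f t y) x
/-- Partial derivative in the second variable. -/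
noncomputable def pd2 (f : ℝ → ℝ → ℝ) : ℝ → ℝ → ℝ := fun x y => deriv (fun t => f x t) y

/-- Membership in P₄(ℝ²): bivariate polynomials of total degree ≤ 4. -/
def MemP4 (u : ℝ → ℝ → ℝ) : Prop :=
  ∃ c : Fin 5 → Fin 5 → ℝ, (∀ i j : Fin 5, 4 < i.1 + j.1 → c i j = 0) ∧
    ∀ x y : ℝ, u x y = ∑ i : Fin 5, ∑ j : Fin 5, c i j * x ^ (i : ℕ) * y ^ (j : ℕ)

/-- Membership in the 2D rectangular Morley shape space
P_T = P₂(ℝ²) + span{x₁³, x₂³}. -/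
def MemPT2 (v : ℝ → ℝ → ℝ) : Prop :=
  ∃ a₀ a₁ a₂ a₃ a₄ a₅ b₁ b₂ : ℝ, ∀ x y : ℝ,
    v x y = a₀ + a₁ * x + a₂ * y + a₃ * x ^ 2 + a₄ * x * y + a₅ * y ^ 2
      + b₁ * x ^ 3 + b₂ * y ^ 3

noncomputable def W (e : Fin 5 → Fin 5 → ℝ) (x y : ℝ) : ℝ :=
  ∑ i : Fin 5, ∑ j : Fin 5, e i j * x ^ (i : ℕ) * y ^ (j : ℕ)

noncomputable def W1 (e : Fin 5 → Fin 5 → ℝ) (x y : ℝ) : ℝ :=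
  ∑ i : Fin 5, ∑ j : Fin 5, e i j * (((i : ℕ) : ℝ) * x ^ ((i : ℕ) - 1)) * y ^ (j : ℕ)

noncomputable def W12 (e : Fin 5 → Fin 5 → ℝ) (x y : ℝ) : ℝ :=
  ∑ i : Fin 5, ∑ j : Fin 5,
    e i j * (((i : ℕ) : ℝ) * x ^ ((i : ℕ) - 1)) * (((j : ℕ) : ℝ) * y ^ ((j : ℕ) - 1))

lemma hasDerivAt_W (e : Fin 5 → Fin 5 → ℝ) (x y : ℝ) :
    HasDerivAt (fun t => W e t y) (W1 e x y) x := by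
  unfold W W1
  apply HasDerivAt.fun_sum; intro i _
  apply HasDerivAt.fun_sum; intro j _
  exact (((hasDerivAt_pow (i : ℕ) x).const_mul (e i j)).mul_const _)

lemma hasDerivAt_W1 (e : Fin 5 → Fin 5 → ℝ) (x y : ℝ) :
    HasDerivAt (fun t => W1 e x t) (W12 e x y) y := by
  unfold W1 W12
  apply HasDerivAt.fun_sum; intro i _
  apply HasDerivAt.fun_sum; intro j _
  exact ((hasDerivAt_pow (j : ℕ) y).const_mul _)

lemma contW1 (e : Fin 5 → Fin 5 → ℝ) (y : ℝ) : Continuous fun x => W1 e x y := by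
  unfold W1; fun_prop

lemma contW12 (e : Fin 5 → Fin 5 → ℝ) (x : ℝ) : Continuous fun y => W12 e x y := by
  unfold W12; fun_prop

lemma intW12 (e : Fin 5 → Fin 5 → ℝ) (x a b : ℝ) (hab : a ≤ b) :
    ∫ y in Icc a b, W12 e x y = W1 e x b - W1 e x a := by
  rw [MeasureTheory.integral_Icc_eq_integral_Ioc, ← intervalIntegral.integral_of_le hab]
  exact intervalIntegral.integral_eq_sub_of_hasDerivAt (fun t _ => hasDerivAt_W1 e x t)
    ((contW12 e x).intervalIntegrable _ _)

/-- Coefficient matrix for a PT2 element. -/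
def cPT (a₀ a₁ a₂ a₃ a₄ a₅ b₁ b₂ : ℝ) : Fin 5 → Fin 5 → ℝ :=
  ![![a₀, a₂, a₅, b₂, 0], ![a₁, a₄, 0, 0, 0], ![a₃, 0, 0, 0, 0],
    ![b₁, 0, 0, 0, 0], ![0, 0, 0, 0, 0]]

lemma W_cPT (a₀ a₁ a₂ a₃ a₄ a₅ b₁ b₂ x y : ℝ) :
    W (cPT a₀ a₁ a₂ a₃ a₄ a₅ b₁ b₂) x y
      = a₀ + a₁ * x + a₂ * y + a₃ * x ^ 2 + a₄ * x * y + a₅ * y ^ 2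
        + b₁ * x ^ 3 + b₂ * y ^ 3 := by
  simp [W, cPT, Fin.sum_univ_five, Matrix.vecHead, Matrix.vecTail, Function.comp, show ((3:Fin 5):ℕ) = 3 from rfl, show ((4:Fin 5):ℕ) = 4 from rfl]; ring

lemma W12_cPT (a₀ a₁ a₂ a₃ a₄ a₅ b₁ b₂ x y : ℝ) :
    W12 (cPT a₀ a₁ a₂ a₃ a₄ a₅ b₁ b₂) x y = a₄ := by
  simp [W12, cPT, Fin.sum_univ_five, Matrix.vecHead, Matrix.vecTail, Function.comp]

/-- For u ∈ P₄(K), v ∈ P_T(K) and the rectangular Morley interpolation Π_K: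
∫_K ∂²(u-Π_K u)/∂x₁∂x₂ · ∂²v/∂x₁∂x₂ = 0. -/
theorem stmt13 (h x₁c x₂c : ℝ) (hh : 0 < h)
    (u Pu v : ℝ → ℝ → ℝ) (hu : MemP4 u) (hPu : MemPT2 Pu) (hv : MemPT2 v)
    (hvtx : ∀ s ∈ ({x₁c - h, x₁c + h} : Set ℝ), ∀ t ∈ ({x₂c - h, x₂c + h} : Set ℝ),
      Pu s t = u s t)
    (hedge1 : ∀ s ∈ ({x₁c - h, x₁c + h} : Set ℝ),
      (∫ t in Icc (x₂c - h) (x₂c + h), pd1 Pu s t) =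
        ∫ t in Icc (x₂c - h) (x₂c + h), pd1 u s t)
    (hedge2 : ∀ t ∈ ({x₂c - h, x₂c + h} : Set ℝ),
      (∫ s in Icc (x₁c - h) (x₁c + h), pd2 Pu s t) =
        ∫ s in Icc (x₁c - h) (x₁c + h), pd2 u s t) :
    (∫ x in Icc (x₁c - h) (x₁c + h), ∫ y in Icc (x₂c - h) (x₂c + h),
      pd2 (pd1 (fun s t => u s t - Pu s t)) x y * pd2 (pd1 v) x y) = 0 := by
  obtain ⟨c, -, hc⟩ := hu
  obtain ⟨p₀, p₁, p₂, p₃, p₄, p₅, q₁, q₂, hP⟩ := hPu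
  obtain ⟨a₀, a₁, a₂, a₃, a₄, a₅, b₁, b₂, hV⟩ := hv
  set a := x₁c - h with ha
  set b := x₁c + h with hb
  set a' := x₂c - h with ha'
  set b' := x₂c + h with hb'
  have hab : a ≤ b := by simp [ha, hb]; linarith
  have hab' : a' ≤ b' := by simp [ha', hb']; linarith
  -- coefficient matrix for w = u - Pu
  set e : Fin 5 → Fin 5 → ℝ :=
    fun i j => c i j - cPT p₀ p₁ p₂ p₃ p₄ p₅ q₁ q₂ i j with he
  have hw : ∀ s t : ℝ, u s t - Pu s t = W e s t := by
    intro s t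
    have : W e s t = W c s t - W (cPT p₀ p₁ p₂ p₃ p₄ p₅ q₁ q₂) s t := by
      simp [W, he, sub_mul, Finset.sum_sub_distrib]
    have hWc : W c s t = u s t := (hc s t).symm
    rw [this, W_cPT, ← hP s t, hWc]
  -- mixed derivative of w equals W12 e
  have hpd1w : ∀ x y : ℝ, pd1 (fun s t => u s t - Pu s t) x y = W1 e x y := by
    intro x y
    have : (fun t => u t y - Pu t y) = fun t => W e t y := funext fun t => hw t y
    rw [pd1]; rw [this]; exact (hasDerivAt_W e x y).deriv
  have hpd12w : ∀ x y : ℝ, pd2 (pd1 (fun s t => u s t - Pu s t)) x y = W12 e x y := by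
    intro x y
    have : (fun t => pd1 (fun s t => u s t - Pu s t) x t) = fun t => W1 e x t :=
      funext fun t => hpd1w x t
    rw [pd2]; rw [this]; exact (hasDerivAt_W1 e x y).deriv
  -- mixed derivative of v is the constant a₄
  set cv := cPT a₀ a₁ a₂ a₃ a₄ a₅ b₁ b₂ with hcv
  have hveq : ∀ s t : ℝ, v s t = W cv s t := by
    intro s t; rw [hV, hcv, W_cPT]
  have hpd12v : ∀ x y : ℝ, pd2 (pd1 v) x y = a₄ := by
    intro x y
    have h1 : ∀ x y : ℝ, pd1 v x y = W1 cv x y := by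
      intro x y
      have : (fun t => v t y) = fun t => W cv t y := funext fun t => hveq t y
      rw [pd1]; rw [this]; exact (hasDerivAt_W cv x y).deriv
    have : (fun t => pd1 v x t) = fun t => W1 cv x t := funext fun t => h1 x t
    rw [pd2]; rw [this, (hasDerivAt_W1 cv x y).deriv, hcv, W12_cPT]
  -- rewrite the integrand
  have hrw : (∫ x in Icc a b, ∫ y in Icc a' b',
      pd2 (pd1 (fun s t => u s t - Pu s t)) x y * pd2 (pd1 v) x y)
      = ∫ x in Icc a b, (W1 e x b' - W1 e x a') * a₄ := by
    apply integral_congr_ae; filter_upwards with x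
    calc (∫ y in Icc a' b',
        pd2 (pd1 (fun s t => u s t - Pu s t)) x y * pd2 (pd1 v) x y)
        = ∫ y in Icc a' b', W12 e x y * a₄ := by
          apply integral_congr_ae; filter_upwards with y
          rw [hpd12w, hpd12v]
      _ = (∫ y in Icc a' b', W12 e x y) * a₄ := integral_mul_const _ _
      _ = (W1 e x b' - W1 e x a') * a₄ := by rw [intW12 e x a' b' hab']
  rw [hrw]
  -- outer FTC
  have hFTC : (∫ x in Icc a b, (W1 e x b' - W1 e x a') * a₄)
      = (W e b b' - W e b a') * a₄ - (W e a b' - W e a a') * a₄ := by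
    rw [MeasureTheory.integral_Icc_eq_integral_Ioc, ← intervalIntegral.integral_of_le hab]
    exact intervalIntegral.integral_eq_sub_of_hasDerivAt
      (f := fun x => (W e x b' - W e x a') * a₄)
      (fun t _ => (((hasDerivAt_W e t b').sub (hasDerivAt_W e t a')).mul_const a₄))
      (((((contW1 e b').sub (contW1 e a')).mul continuous_const)).intervalIntegrable _ _)
  rw [hFTC]
  -- vertex values vanish
  have hz : ∀ s ∈ ({a, b} : Set ℝ), ∀ t ∈ ({a', b'} : Set ℝ), W e s t = 0 := by
    intro s hs t ht
    rw [← hw s t, hvtx s hs t ht, sub_self]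
  rw [hz a (by simp) a' (by simp), hz a (by simp) b' (by simp),
    hz b (by simp) a' (by simp), hz b (by simp) b' (by simp)]
  ring
end

section
/- Let K be a square of side 2h, u ∈ P₄(K), v ∈ P_T(K) = P₂ + span{x₁³,x₂³}, and Π_K the rectangular Morley interpolation on K. Then ∫_K (∂²(u-Π_K u)/∂x₁²)(∂²v/∂x₁²) dx₁dx₂ = (h²/3) ∫_K (∂³u/∂x₁∂x₂²)(∂³v/∂x₁³) dx₁dx₂. -/
open MeasureTheory Set

private lemma derivP (A B C D E x : ℝ) :
    deriv (fun t : ℝ => A + B * t + C * t ^ 2 + D * t ^ 3 + E * t ^ 4) x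
      = B + 2 * C * x + 3 * D * x ^ 2 + 4 * E * x ^ 3 := by
  have h : HasDerivAt (fun t : ℝ => A + B * t + C * t ^ 2 + D * t ^ 3 + E * t ^ 4)
      (B + 2 * C * x + 3 * D * x ^ 2 + 4 * E * x ^ 3) x := by
    have h0 := hasDerivAt_const x A
    have h1 := (hasDerivAt_id x).const_mul B
    have h2 := (hasDerivAt_pow 2 x).const_mul C
    have h3 := (hasDerivAt_pow 3 x).const_mul D
    have h4 := (hasDerivAt_pow 4 x).const_mul E
    exact ((((h0.add h1).add h2).add h3).add h4).congr_deriv (by push_cast; ring)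
  exact h.deriv

private lemma intP {a b : ℝ} (hab : a ≤ b) (A B C D E : ℝ) :
    (∫ t in Icc a b, (A + B * t + C * t ^ 2 + D * t ^ 3 + E * t ^ 4)) =
      A * (b - a) + B * (b ^ 2 - a ^ 2) / 2 + C * (b ^ 3 - a ^ 3) / 3
        + D * (b ^ 4 - a ^ 4) / 4 + E * (b ^ 5 - a ^ 5) / 5 := by
  rw [MeasureTheory.integral_Icc_eq_integral_Ioc, ← intervalIntegral.integral_of_le hab]
  have hd : ∀ t ∈ Set.uIcc a b, HasDerivAt
      (fun t : ℝ => A * t + B * t ^ 2 / 2 + C * t ^ 3 / 3 + D * t ^ 4 / 4 + E * t ^ 5 / 5)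
      (A + B * t + C * t ^ 2 + D * t ^ 3 + E * t ^ 4) t := by
    intro t _
    have h1 := (hasDerivAt_id t).const_mul A
    have h2 := ((hasDerivAt_pow 2 t).const_mul B).div_const 2
    have h3 := ((hasDerivAt_pow 3 t).const_mul C).div_const 3
    have h4 := ((hasDerivAt_pow 4 t).const_mul D).div_const 4
    have h5 := ((hasDerivAt_pow 5 t).const_mul E).div_const 5
    exact ((((h1.add h2).add h3).add h4).add h5).congr_deriv (by push_cast; ring)
  rw [intervalIntegral.integral_eq_sub_of_hasDerivAt hd
    ((Continuous.intervalIntegrable (by continuity) a b))]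
  ring

/-- For u ∈ P₄(K), v ∈ P_T(K) and the rectangular Morley interpolation Π_K:
∫_K ∂²(u-Π_K u)/∂x₁² · ∂²v/∂x₁² = (h²/3)∫_K ∂³u/∂x₁∂x₂² · ∂³v/∂x₁³. -/
theorem stmt14 (h x₁c x₂c : ℝ) (hh : 0 < h)
    (u Pu v : ℝ → ℝ → ℝ) (hu : MemP4 u) (hPu : MemPT2 Pu) (hv : MemPT2 v)
    (hvtx : ∀ s ∈ ({x₁c - h, x₁c + h} : Set ℝ), ∀ t ∈ ({x₂c - h, x₂c + h} : Set ℝ),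
      Pu s t = u s t)
    (hedge1 : ∀ s ∈ ({x₁c - h, x₁c + h} : Set ℝ),
      (∫ t in Icc (x₂c - h) (x₂c + h), pd1 Pu s t) =
        ∫ t in Icc (x₂c - h) (x₂c + h), pd1 u s t)
    (hedge2 : ∀ t ∈ ({x₂c - h, x₂c + h} : Set ℝ),
      (∫ s in Icc (x₁c - h) (x₁c + h), pd2 Pu s t) =
        ∫ s in Icc (x₁c - h) (x₁c + h), pd2 u s t) :
    (∫ x in Icc (x₁c - h) (x₁c + h), ∫ y in Icc (x₂c - h) (x₂c + h),
      pd1 (pd1 (fun s t => u s t - Pu s t)) x y * pd1 (pd1 v) x y) =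
    (h ^ 2 / 3) * ∫ x in Icc (x₁c - h) (x₁c + h), ∫ y in Icc (x₂c - h) (x₂c + h),
      pd1 (pd2 (pd2 u)) x y * pd1 (pd1 (pd1 v)) x y := by
  obtain ⟨c, hc0, hcu⟩ := hu
  obtain ⟨p0, p1, p2, p3, p4, p5, p6, p7, hP⟩ := hPu
  obtain ⟨a0, a1, a2, a3, a4, a5, b1, b2, hV⟩ := hv
  have hx : x₁c - h ≤ x₁c + h := by linarith
  have hy : x₂c - h ≤ x₂c + h := by linarith
  have hu' : ∀ x y : ℝ, u x y = (1) * c 0 0 + (1) * c 0 1 * y + (1) * c 0 2 * y ^ 2 + (1) * c 0 3 * y ^ 3 + (1) * c 0 4 * y ^ 4 + (1) * c 1 0 * x + (1) * c 1 1 * x * y + (1) * c 1 2 * x * y ^ 2 + (1) * c 1 3 * x * y ^ 3 + (1) * c 2 0 * x ^ 2 + (1) * c 2 1 * x ^ 2 * y + (1) * c 2 2 * x ^ 2 * y ^ 2 + (1) * c 3 0 * x ^ 3 + (1) * c 3 1 * x ^ 3 * y + (1) * c 4 0 * x ^ 4 := by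
    intro x y
    rw [hcu]
    simp only [Fin.sum_univ_five, show ((0 : Fin 5) : ℕ) = 0 from rfl,
      show ((1 : Fin 5) : ℕ) = 1 from rfl, show ((2 : Fin 5) : ℕ) = 2 from rfl,
      show ((3 : Fin 5) : ℕ) = 3 from rfl, show ((4 : Fin 5) : ℕ) = 4 from rfl]
    rw [hc0 1 4 (by decide), hc0 2 3 (by decide), hc0 2 4 (by decide),
      hc0 3 2 (by decide), hc0 3 3 (by decide), hc0 3 4 (by decide),
      hc0 4 1 (by decide), hc0 4 2 (by decide), hc0 4 3 (by decide),
      hc0 4 4 (by decide)]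
    ring
  have hU1 : ∀ x y : ℝ, pd1 u x y = (1) * c 1 0 + (1) * c 1 1 * y + (1) * c 1 2 * y ^ 2 + (1) * c 1 3 * y ^ 3 + (2) * c 2 0 * x + (2) * c 2 1 * x * y + (2) * c 2 2 * x * y ^ 2 + (3) * c 3 0 * x ^ 2 + (3) * c 3 1 * x ^ 2 * y + (4) * c 4 0 * x ^ 3 := by
    intro x y
    have e : pd1 u x y = deriv (fun t => u t y) x := rfl
    rw [e, show (fun t => u t y) = (fun t : ℝ => ((1) * c 0 0 + (1) * c 0 1 * y + (1) * c 0 2 * y ^ 2 + (1) * c 0 3 * y ^ 3 + (1) * c 0 4 * y ^ 4) + ((1) * c 1 0 + (1) * c 1 1 * y + (1) * c 1 2 * y ^ 2 + (1) * c 1 3 * y ^ 3) * t + ((1) * c 2 0 + (1) * c 2 1 * y + (1) * c 2 2 * y ^ 2) * t ^ 2 + ((1) * c 3 0 + (1) * c 3 1 * y) * t ^ 3 + ((1) * c 4 0) * t ^ 4) from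
      funext fun t => by rw [hu']; ring, derivP]
    ring
  have hU2 : ∀ x y : ℝ, pd2 u x y = (1) * c 0 1 + (2) * c 0 2 * y + (3) * c 0 3 * y ^ 2 + (4) * c 0 4 * y ^ 3 + (1) * c 1 1 * x + (2) * c 1 2 * x * y + (3) * c 1 3 * x * y ^ 2 + (1) * c 2 1 * x ^ 2 + (2) * c 2 2 * x ^ 2 * y + (1) * c 3 1 * x ^ 3 := by
    intro x y
    have e : pd2 u x y = deriv (fun t => u x t) y := rfl
    rw [e, show (fun t => u x t) = (fun t : ℝ => ((1) * c 0 0 + (1) * c 1 0 * x + (1) * c 2 0 * x ^ 2 + (1) * c 3 0 * x ^ 3 + (1) * c 4 0 * x ^ 4) + ((1) * c 0 1 + (1) * c 1 1 * x + (1) * c 2 1 * x ^ 2 + (1) * c 3 1 * x ^ 3) * t + ((1) * c 0 2 + (1) * c 1 2 * x + (1) * c 2 2 * x ^ 2) * t ^ 2 + ((1) * c 0 3 + (1) * c 1 3 * x) * t ^ 3 + ((1) * c 0 4) * t ^ 4) from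
      funext fun t => by rw [hu']; ring, derivP]
    ring
  have hU22 : ∀ x y : ℝ, pd2 (pd2 u) x y = (2) * c 0 2 + (6) * c 0 3 * y + (12) * c 0 4 * y ^ 2 + (2) * c 1 2 * x + (6) * c 1 3 * x * y + (2) * c 2 2 * x ^ 2 := by
    intro x y
    have e : pd2 (pd2 u) x y = deriv (fun t => pd2 u x t) y := rfl
    rw [e, show (fun t => pd2 u x t) = (fun t : ℝ => ((1) * c 0 1 + (1) * c 1 1 * x + (1) * c 2 1 * x ^ 2 + (1) * c 3 1 * x ^ 3) + ((2) * c 0 2 + (2) * c 1 2 * x + (2) * c 2 2 * x ^ 2) * t + ((3) * c 0 3 + (3) * c 1 3 * x) * t ^ 2 + ((4) * c 0 4) * t ^ 3 + (0) * t ^ 4) from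
      funext fun t => by rw [hU2]; ring, derivP]
    ring
  have hU122 : ∀ x y : ℝ, pd1 (pd2 (pd2 u)) x y = (2) * c 1 2 + (6) * c 1 3 * y + (4) * c 2 2 * x := by
    intro x y
    have e : pd1 (pd2 (pd2 u)) x y = deriv (fun t => pd2 (pd2 u) t y) x := rfl
    rw [e, show (fun t => pd2 (pd2 u) t y) = (fun t : ℝ => ((2) * c 0 2 + (6) * c 0 3 * y + (12) * c 0 4 * y ^ 2) + ((2) * c 1 2 + (6) * c 1 3 * y) * t + ((2) * c 2 2) * t ^ 2 + (0) * t ^ 3 + (0) * t ^ 4) from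
      funext fun t => by rw [hU22]; ring, derivP]
    ring
  have hW1 : ∀ x y : ℝ, pd1 (fun s t => u s t - Pu s t) x y = (-1) * p1 + (-2) * p3 * x + (-1) * p4 * y + (-3) * p6 * x ^ 2 + (1) * c 1 0 + (1) * c 1 1 * y + (1) * c 1 2 * y ^ 2 + (1) * c 1 3 * y ^ 3 + (2) * c 2 0 * x + (2) * c 2 1 * x * y + (2) * c 2 2 * x * y ^ 2 + (3) * c 3 0 * x ^ 2 + (3) * c 3 1 * x ^ 2 * y + (4) * c 4 0 * x ^ 3 := by
    intro x y
    have e : pd1 (fun s t => u s t - Pu s t) x y = deriv (fun t => u t y - Pu t y) x := rfl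
    rw [e, show (fun t => u t y - Pu t y) = (fun t : ℝ => ((-1) * p0 + (-1) * p2 * y + (-1) * p5 * y ^ 2 + (-1) * p7 * y ^ 3 + (1) * c 0 0 + (1) * c 0 1 * y + (1) * c 0 2 * y ^ 2 + (1) * c 0 3 * y ^ 3 + (1) * c 0 4 * y ^ 4) + ((-1) * p1 + (-1) * p4 * y + (1) * c 1 0 + (1) * c 1 1 * y + (1) * c 1 2 * y ^ 2 + (1) * c 1 3 * y ^ 3) * t + ((-1) * p3 + (1) * c 2 0 + (1) * c 2 1 * y + (1) * c 2 2 * y ^ 2) * t ^ 2 + ((-1) * p6 + (1) * c 3 0 + (1) * c 3 1 * y) * t ^ 3 + ((1) * c 4 0) * t ^ 4) from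
      funext fun t => by rw [hu', hP]; ring, derivP]
    ring
  have hW11 : ∀ x y : ℝ, pd1 (pd1 (fun s t => u s t - Pu s t)) x y = (-2) * p3 + (-6) * p6 * x + (2) * c 2 0 + (2) * c 2 1 * y + (2) * c 2 2 * y ^ 2 + (6) * c 3 0 * x + (6) * c 3 1 * x * y + (12) * c 4 0 * x ^ 2 := by
    intro x y
    have e : pd1 (pd1 (fun s t => u s t - Pu s t)) x y
        = deriv (fun t => pd1 (fun s t => u s t - Pu s t) t y) x := rfl
    rw [e, show (fun t => pd1 (fun s t => u s t - Pu s t) t y) = (fun t : ℝ => ((-1) * p1 + (-1) * p4 * y + (1) * c 1 0 + (1) * c 1 1 * y + (1) * c 1 2 * y ^ 2 + (1) * c 1 3 * y ^ 3) + ((-2) * p3 + (2) * c 2 0 + (2) * c 2 1 * y + (2) * c 2 2 * y ^ 2) * t + ((-3) * p6 + (3) * c 3 0 + (3) * c 3 1 * y) * t ^ 2 + ((4) * c 4 0) * t ^ 3 + (0) * t ^ 4) from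
      funext fun t => by rw [hW1]; ring, derivP]
    ring
  have hV1 : ∀ x y : ℝ, pd1 v x y = (1) * a1 + (2) * a3 * x + (1) * a4 * y + (3) * b1 * x ^ 2 := by
    intro x y
    have e : pd1 v x y = deriv (fun t => v t y) x := rfl
    rw [e, show (fun t => v t y) = (fun t : ℝ => ((1) * a0 + (1) * a2 * y + (1) * a5 * y ^ 2 + (1) * b2 * y ^ 3) + ((1) * a1 + (1) * a4 * y) * t + ((1) * a3) * t ^ 2 + ((1) * b1) * t ^ 3 + (0) * t ^ 4) from
      funext fun t => by rw [hV]; ring, derivP]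
    ring
  have hV11 : ∀ x y : ℝ, pd1 (pd1 v) x y = (2) * a3 + (6) * b1 * x := by
    intro x y
    have e : pd1 (pd1 v) x y = deriv (fun t => pd1 v t y) x := rfl
    rw [e, show (fun t => pd1 v t y) = (fun t : ℝ => ((1) * a1 + (1) * a4 * y) + ((2) * a3) * t + ((3) * b1) * t ^ 2 + (0) * t ^ 3 + (0) * t ^ 4) from
      funext fun t => by rw [hV1]; ring, derivP]
    ring
  have hV111 : ∀ x y : ℝ, pd1 (pd1 (pd1 v)) x y = (6) * b1 := by
    intro x y
    have e : pd1 (pd1 (pd1 v)) x y = deriv (fun t => pd1 (pd1 v) t y) x := rfl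
    rw [e, show (fun t => pd1 (pd1 v) t y) = (fun t : ℝ => ((2) * a3) + ((6) * b1) * t + (0) * t ^ 2 + (0) * t ^ 3 + (0) * t ^ 4) from
      funext fun t => by rw [hV11]; ring, derivP]
    ring
  have hPu1 : ∀ x y : ℝ, pd1 Pu x y = (1) * p1 + (2) * p3 * x + (1) * p4 * y + (3) * p6 * x ^ 2 := by
    intro x y
    have e : pd1 Pu x y = deriv (fun t => Pu t y) x := rfl
    rw [e, show (fun t => Pu t y) = (fun t : ℝ => ((1) * p0 + (1) * p2 * y + (1) * p5 * y ^ 2 + (1) * p7 * y ^ 3) + ((1) * p1 + (1) * p4 * y) * t + ((1) * p3) * t ^ 2 + ((1) * p6) * t ^ 3 + (0) * t ^ 4) from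
      funext fun t => by rw [hP]; ring, derivP]
    ring
  have hGU : ∀ s : ℝ, (∫ t in Icc (x₂c - h) (x₂c + h), pd1 u s t) = (4) * x₂c * h * s * c 2 1 + (6) * x₂c * h * s ^ 2 * c 3 1 + (2) * x₂c * h * c 1 1 + (2) * x₂c * h ^ 3 * c 1 3 + (4) * x₂c ^ 2 * h * s * c 2 2 + (2) * x₂c ^ 2 * h * c 1 2 + (2) * x₂c ^ 3 * h * c 1 3 + (4) * h * s * c 2 0 + (6) * h * s ^ 2 * c 3 0 + (8) * h * s ^ 3 * c 4 0 + (2) * h * c 1 0 + (4/3) * h ^ 3 * s * c 2 2 + (2/3) * h ^ 3 * c 1 2 := by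
    intro s
    rw [show (fun t => pd1 u s t) = (fun t : ℝ => ((2) * s * c 2 0 + (3) * s ^ 2 * c 3 0 + (4) * s ^ 3 * c 4 0 + (1) * c 1 0) + ((2) * s * c 2 1 + (3) * s ^ 2 * c 3 1 + (1) * c 1 1) * t + ((2) * s * c 2 2 + (1) * c 1 2) * t ^ 2 + ((1) * c 1 3) * t ^ 3 + (0) * t ^ 4) from
      funext fun t => by rw [hU1]; ring, intP hy]
    ring
  have hGP : ∀ s : ℝ, (∫ t in Icc (x₂c - h) (x₂c + h), pd1 Pu s t) = (2) * x₂c * h * p4 + (2) * h * p1 + (4) * h * p3 * s + (6) * h * p6 * s ^ 2 := by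
    intro s
    rw [show (fun t => pd1 Pu s t) = (fun t : ℝ => ((1) * p1 + (2) * p3 * s + (3) * p6 * s ^ 2) + ((1) * p4) * t + (0) * t ^ 2 + (0) * t ^ 3 + (0) * t ^ 4) from
      funext fun t => by rw [hPu1]; ring, intP hy]
    ring
  have e5 := hedge1 (x₁c - h) (Set.mem_insert _ _)
  have e6 := hedge1 (x₁c + h) (Set.mem_insert_of_mem _ rfl)
  rw [hGU, hGP] at e5 e6
  have epp := hvtx (x₁c + h) (Set.mem_insert_of_mem _ rfl) (x₂c + h) (Set.mem_insert_of_mem _ rfl)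
  have emp := hvtx (x₁c - h) (Set.mem_insert _ _) (x₂c + h) (Set.mem_insert_of_mem _ rfl)
  have epm := hvtx (x₁c + h) (Set.mem_insert_of_mem _ rfl) (x₂c - h) (Set.mem_insert _ _)
  have emm := hvtx (x₁c - h) (Set.mem_insert _ _) (x₂c - h) (Set.mem_insert _ _)
  rw [hP, hu'] at epp emp epm emm
  have hin1 : ∀ x : ℝ, (∫ y in Icc (x₂c - h) (x₂c + h),
      ((-2) * p3 + (-6) * p6 * x + (2) * c 2 0 + (2) * c 2 1 * y + (2) * c 2 2 * y ^ 2 + (6) * c 3 0 * x + (6) * c 3 1 * x * y + (12) * c 4 0 * x ^ 2) * ((2) * a3 + (6) * b1 * x)) = ((8) * a3 * x₂c * h * c 2 1 + (8) * a3 * x₂c ^ 2 * h * c 2 2 + (-8) * a3 * h * p3 + (8) * a3 * h * c 2 0 + (8/3) * a3 * h ^ 3 * c 2 2) + ((24) * a3 * x₂c * h * c 3 1 + (-24) * a3 * h * p6 + (24) * a3 * h * c 3 0 + (24) * x₂c * b1 * h * c 2 1 + (24) * x₂c ^ 2 * b1 * h * c 2 2 + (-24) * b1 * h * p3 + (24)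 * b1 * h * c 2 0 + (8) * b1 * h ^ 3 * c 2 2) * x + ((48) * a3 * h * c 4 0 + (72) * x₂c * b1 * h * c 3 1 + (-72) * b1 * h * p6 + (72) * b1 * h * c 3 0) * x ^ 2 + ((144) * b1 * h * c 4 0) * x ^ 3 + (0) * x ^ 4 := by
    intro x
    rw [show (fun y => ((-2) * p3 + (-6) * p6 * x + (2) * c 2 0 + (2) * c 2 1 * y + (2) * c 2 2 * y ^ 2 + (6) * c 3 0 * x + (6) * c 3 1 * x * y + (12) * c 4 0 * x ^ 2) * ((2) * a3 + (6) * b1 * x)) = (fun y : ℝ => ((-4) * a3 * p3 + (-12) * a3 * p6 * x + (4) * a3 * c 2 0 + (12) * a3 * c 3 0 * x + (24) * a3 * c 4 0 * x ^ 2 + (-12) * b1 * p3 * x + (-36) * b1 * p6 * x ^ 2 + (12) * b1 * c 2 0 * x + (36) * b1 * c 3 0 * x ^ 2 + (72) * b1 * c 4 0 * x ^ 3) + ((4) * a3 * c 2 1 + (12) * a3 * c 3 1 * x + (12) * b1 * c 2 1 * x + (36) * b1 * c 3 1 * x ^ 2) * y + ((4) * a3 * c 2 2 + (12) * b1 * c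 2 2 * x) * y ^ 2 + (0) * y ^ 3 + (0) * y ^ 4) from
      funext fun y => by ring, intP hy]
    ring
  have hin2 : ∀ x : ℝ, (∫ y in Icc (x₂c - h) (x₂c + h),
      ((2) * c 1 2 + (6) * c 1 3 * y + (4) * c 2 2 * x) * ((6) * b1)) = ((72) * x₂c * b1 * h * c 1 3 + (24) * b1 * h * c 1 2) + ((48) * b1 * h * c 2 2) * x + (0) * x ^ 2 + (0) * x ^ 3 + (0) * x ^ 4 := by
    intro x
    rw [show (fun y => ((2) * c 1 2 + (6) * c 1 3 * y + (4) * c 2 2 * x) * ((6) * b1)) = (fun y : ℝ => ((12) * b1 * c 1 2 + (24) * b1 * c 2 2 * x) + ((36) * b1 * c 1 3) * y + (0) * y ^ 2 + (0) * y ^ 3 + (0) * y ^ 4) from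
      funext fun y => by ring, intP hy]
    ring
  simp only [hW11, hV11, hU122, hV111]
  simp only [hin1, hin2]
  rw [intP hx, intP hx]
  linear_combination ((2 : ℝ) * a3 + 6 * b1 * (x₁c - h)) * e5
    - ((2 : ℝ) * a3 + 6 * b1 * (x₁c + h)) * e6
    + 6 * b1 * h * (epp - emp + epm - emm)
end

section
/- The set of 12 degrees of freedom consisting of the values at the four vertices of the square K = [-1,1]² and the mean normal derivatives over the four edges of K is unisolvent for the 8-dimensional space P_T(K) = P₂ + span{ξ₁³, ξ₂³}: if v ∈ P_T(K) satisfies v(a_i) = 0 at all four vertices a_i and ∫_{F_j} ∂v/∂ν ds = 0 on all four edges F_j, then v = 0. -/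
open MeasureTheory Set

open intervalIntegral in
lemma integral_linear_Icc (c d : ℝ) : (∫ t in Icc (-1:ℝ) 1, (c + d * t)) = 2 * c := by
  rw [MeasureTheory.integral_Icc_eq_integral_Ioc,
    ← intervalIntegral.integral_of_le (by norm_num : (-1:ℝ) ≤ 1)]
  rw [integral_add (intervalIntegrable_const) ((intervalIntegrable_id).const_mul d),
    intervalIntegral.integral_const_mul, integral_id]
  norm_num

lemma deriv_poly (a₀ a₁ a₂ a₃ x : ℝ) :
    deriv (fun t : ℝ => a₀ + a₁ * t + a₂ * t ^ 2 + a₃ * t ^ 3) x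
      = a₁ + 2 * a₂ * x + 3 * a₃ * x ^ 2 := by
  have h1 : HasDerivAt (fun t : ℝ => t) 1 x := hasDerivAt_id x
  have h2 : HasDerivAt (fun t : ℝ => t ^ 2) (2 * x) x := by
    simpa using hasDerivAt_pow 2 x
  have h3 : HasDerivAt (fun t : ℝ => t ^ 3) (3 * x ^ 2) x := by
    simpa using hasDerivAt_pow 3 x
  have H := (((hasDerivAt_const x a₀).add (h1.const_mul a₁)).add
    (h2.const_mul a₂)).add (h3.const_mul a₃)
  rw [(show HasDerivAt (fun t : ℝ => a₀ + a₁ * t + a₂ * t ^ 2 + a₃ * t ^ 3) _ x from H).deriv]; ring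

/-- Unisolvence of the rectangular Morley degrees of freedom on K = [-1,1]²:
if v ∈ P_T(K) vanishes at the four vertices and the integral of its outward normal
derivative over each of the four edges vanishes, then v = 0. -/
theorem stmt17 (v : ℝ → ℝ → ℝ) (hv : MemPT2 v)
    (hvtx : v 1 1 = 0 ∧ v 1 (-1) = 0 ∧ v (-1) 1 = 0 ∧ v (-1) (-1) = 0)
    (he1 : (∫ t in Icc (-1 : ℝ) 1, pd1 v 1 t) = 0)
    (he2 : (∫ t in Icc (-1 : ℝ) 1, -pd1 v (-1) t) = 0)
    (he3 : (∫ s in Icc (-1 : ℝ) 1, pd2 v s 1) = 0)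
    (he4 : (∫ s in Icc (-1 : ℝ) 1, -pd2 v s (-1)) = 0) :
    ∀ x y : ℝ, v x y = 0 := by
  obtain ⟨a₀, a₁, a₂, a₃, a₄, a₅, b₁, b₂, hf⟩ := hv
  have hpd1 : ∀ x y : ℝ, pd1 v x y = a₁ + 2 * a₃ * x + a₄ * y + 3 * b₁ * x ^ 2 := by
    intro x y
    have hfun : (fun t => v t y)
        = fun t : ℝ => (a₀ + a₂ * y + a₅ * y ^ 2 + b₂ * y ^ 3)
          + (a₁ + a₄ * y) * t + a₃ * t ^ 2 + b₁ * t ^ 3 := by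
      funext t; rw [hf t y]; ring
    simp only [pd1, hfun, deriv_poly]; ring
  have hpd2 : ∀ x y : ℝ, pd2 v x y = a₂ + a₄ * x + 2 * a₅ * y + 3 * b₂ * y ^ 2 := by
    intro x y
    have hfun : (fun t => v x t)
        = fun t : ℝ => (a₀ + a₁ * x + a₃ * x ^ 2 + b₁ * x ^ 3)
          + (a₂ + a₄ * x) * t + a₅ * t ^ 2 + b₂ * t ^ 3 := by
      funext t; rw [hf x t]; ring
    simp only [pd2, hfun, deriv_poly]
  have E1 : (2 : ℝ) * (a₁ + 2 * a₃ + 3 * b₁) = 0 := by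
    rw [← integral_linear_Icc (a₁ + 2 * a₃ + 3 * b₁) a₄, ← he1]
    congr 1; funext t; rw [hpd1]; ring
  have E2 : (2 : ℝ) * (-(a₁ - 2 * a₃ + 3 * b₁)) = 0 := by
    rw [← integral_linear_Icc (-(a₁ - 2 * a₃ + 3 * b₁)) (-a₄), ← he2]
    congr 1; funext t; rw [hpd1]; ring
  have E3 : (2 : ℝ) * (a₂ + 2 * a₅ + 3 * b₂) = 0 := by
    rw [← integral_linear_Icc (a₂ + 2 * a₅ + 3 * b₂) a₄, ← he3]
    congr 1; funext s; rw [hpd2]; ring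
  have E4 : (2 : ℝ) * (-(a₂ - 2 * a₅ + 3 * b₂)) = 0 := by
    rw [← integral_linear_Icc (-(a₂ - 2 * a₅ + 3 * b₂)) (-a₄), ← he4]
    congr 1; funext s; rw [hpd2]; ring
  obtain ⟨hV1, hV2, hV3, hV4⟩ := hvtx
  rw [hf] at hV1 hV2 hV3 hV4
  norm_num at hV1 hV2 hV3 hV4
  have ha₃ : a₃ = 0 := by linarith
  have ha₅ : a₅ = 0 := by linarith
  have ha₁ : a₁ + 3 * b₁ = 0 := by linarith
  have ha₂ : a₂ + 3 * b₂ = 0 := by linarith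
  have ha₀ : a₀ = 0 := by linarith
  have ha₄ : a₄ = 0 := by linarith
  have hb₁ : b₁ = 0 := by linarith
  have hb₂ : b₂ = 0 := by linarith
  intro x y
  rw [hf x y, ha₀, ha₃, ha₄, ha₅, hb₁, hb₂]
  have : a₁ = 0 := by linarith
  have h2 : a₂ = 0 := by linarith
  rw [this, h2]; ring
end
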